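/- Let A ⊆ ℝ^d be a measurable set, x ∈ ℝ^d, p ∈ (0,1), and suppose μ_x(A) ≥ p. Then for every δ ∈ ℝ^d, μ_{x+δ}(A) ≥ Φ(Φ⁻¹(p) − ‖δ‖₂/σ). -/

import Mathlib

open MeasureTheory ProbabilityTheory
open scoped RealInnerProductSpace

/-- `Phi` : cumulative distribution function of the standard real Gaussian N(0,1). -/
noncomputable def Phi : ℝ → ℝ := fun t => ((gaussianReal 0 1) (Set.Iic t)).toReal

/-- `PhiInv` : the standard Gaussian quantile function, inverse of `Phi` on (0,1). -/
noncomputable def PhiInv : ℝ → ℝ := Function.invFun Phi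

/-- `gaussPi d σ x` : the isotropic Gaussian measure on ℝ^d with mean `x` and covariance σ²I,
i.e. the product measure whose i-th factor is the real Gaussian with mean `x i`, variance σ². -/
noncomputable def gaussPi (d : ℕ) (σ : ℝ) (x : EuclideanSpace ℝ (Fin d)) :
    Measure (EuclideanSpace ℝ (Fin d)) :=
  Measure.map (WithLp.toLp 2) (Measure.pi fun i => gaussianReal (x i) ⟨σ ^ 2, sq_nonneg σ⟩)

section Auxiliary

open Set Real Filter
open scoped ENNReal NNReal Topology

variable {σ : ℝ} {d n : ℕ}

theorem lintegral_pi_prod' {n : ℕ} (μ : Fin n → Measure ℝ) [∀ i, SigmaFinite (μ i)]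
    {f : Fin n → ℝ → ℝ≥0∞} (hf : ∀ i, Measurable (f i)) :
    ∫⁻ x, ∏ i, f i (x i) ∂Measure.pi μ = ∏ i, ∫⁻ x, f i x ∂μ i := by
  induction n with
  | zero =>
      simp only [Finset.univ_eq_empty, Finset.prod_empty]
      simp [Measure.pi_of_empty]
  | succ n ih =>
      have hmeas : Measurable (fun x : Fin (n+1) → ℝ => ∏ i, f i (x i)) :=
        Finset.measurable_prod _ fun i _ => (hf i).comp (measurable_pi_apply i)
      have hmp := (measurePreserving_piFinSuccAbove μ 0).symm
      rw [← hmp.lintegral_comp hmeas]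
      simp_rw [MeasurableEquiv.piFinSuccAbove_symm_apply, Fin.insertNthEquiv,
        Fin.prod_univ_succ, Fin.insertNth_zero]
      simp only [Fin.zero_succAbove, Function.comp_def, Fin.cons_zero, Fin.cons_succ,
        Equiv.coe_fn_mk, cast_eq]
      rw [lintegral_prod_mul (f := f 0) (g := fun w : Fin n → ℝ => ∏ i, f i.succ (w i))
        ((hf 0).aemeasurable)
        ((Finset.measurable_prod _ fun i _ => (hf _).comp (measurable_pi_apply i)).aemeasurable)]
      rw [ih (fun i => μ i.succ) (fun i => hf _)]

theorem pi_withDensity' {n : ℕ} (μ : Fin n → Measure ℝ) [∀ i, SigmaFinite (μ i)]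
    (ν : Fin n → Measure ℝ) [∀ i, SigmaFinite (ν i)]
    {f : Fin n → ℝ → ℝ≥0∞} (hf : ∀ i, Measurable (f i))
    (hν : ∀ i, ν i = (μ i).withDensity (f i)) :
    Measure.pi ν = (Measure.pi μ).withDensity (fun x => ∏ i, f i (x i)) := by
  have hmeas : Measurable (fun x : Fin n → ℝ => ∏ i, f i (x i)) :=
    Finset.measurable_prod _ fun i _ => (hf i).comp (measurable_pi_apply i)
  refine (Measure.pi_eq fun s hs => ?_)
  rw [withDensity_apply _ (MeasurableSet.univ_pi hs)]
  have : ∀ x : Fin n → ℝ, (univ.pi s).indicator (fun x => ∏ i, f i (x i)) x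
      = ∏ i, (s i).indicator (f i) (x i) := by
    intro x
    by_cases hx : x ∈ univ.pi s
    · rw [indicator_of_mem hx]
      exact Finset.prod_congr rfl fun i _ => (indicator_of_mem (hx i (mem_univ i)) _).symm
    · rw [indicator_of_notMem hx]
      rw [Set.mem_pi] at hx
      push_neg at hx
      obtain ⟨i, -, hi⟩ := hx
      exact (Finset.prod_eq_zero (Finset.mem_univ i) (indicator_of_notMem hi _)).symm
  rw [← lintegral_indicator (MeasurableSet.univ_pi hs)]
  simp_rw [this]
  rw [lintegral_pi_prod' μ (fun i => (hf i).indicator (hs i))]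
  exact Finset.prod_congr rfl fun i _ => by
    rw [lintegral_indicator (hs i), ← withDensity_apply _ (hs i), ← hν i]

theorem gauss_shift_density (hσ : 0 < σ) (m t : ℝ) :
    gaussianReal (m + t) ⟨σ ^ 2, sq_nonneg σ⟩
      = (gaussianReal m ⟨σ ^ 2, sq_nonneg σ⟩).withDensity
        (fun z => ENNReal.ofReal (exp ((t * (z - m) - t ^ 2 / 2) / σ ^ 2))) := by
  have hv : (⟨σ ^ 2, sq_nonneg σ⟩ : ℝ≥0) ≠ 0 := by
    simp [← NNReal.coe_ne_zero, (pow_pos hσ 2).ne']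
  set v : ℝ≥0 := ⟨σ ^ 2, sq_nonneg σ⟩ with hv_def
  rw [gaussianReal_of_var_ne_zero _ hv, gaussianReal_of_var_ne_zero _ hv,
    ← withDensity_mul _ (measurable_gaussianPDF _ _)
      (by fun_prop)]
  congr 1
  funext z
  unfold gaussianPDF
  rw [Pi.mul_apply, ← ENNReal.ofReal_mul (gaussianPDFReal_nonneg _ _ _)]
  congr 1
  unfold gaussianPDFReal
  have h2 : (0:ℝ) < σ ^ 2 := pow_pos hσ 2
  simp only [show (v : ℝ) = σ ^ 2 from rfl]
  rw [mul_assoc _ (rexp _) (rexp _), ← Real.exp_add]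
  congr 2
  field_simp
  ring

theorem gauss_map_eq (hσ : 0 < σ) (m : ℝ) :
    gaussianReal m ⟨σ ^ 2, sq_nonneg σ⟩ = (gaussianReal 0 1).map (fun z => σ * z + m) := by
  have h1 : (fun z : ℝ => σ * z + m) = (· + m) ∘ (σ * ·) := rfl
  rw [h1, ← Measure.map_map (measurable_add_const m) (measurable_const_mul σ),
    gaussianReal_map_const_mul, gaussianReal_map_add_const]
  congr 1
  · ring
  · ext
    simp
    rfl

theorem gauss_Iic (hσ : 0 < σ) (m c : ℝ) :
    gaussianReal m ⟨σ ^ 2, sq_nonneg σ⟩ (Iic c) = gaussianReal 0 1 (Iic ((c - m) / σ)) := by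
  rw [gauss_map_eq hσ, Measure.map_apply (by fun_prop) measurableSet_Iic]
  congr 1
  ext z
  simp only [mem_preimage, mem_Iic]
  rw [le_div_iff₀ hσ]
  constructor <;> intro h <;> nlinarith

theorem gauss_Iic_toReal (hσ : 0 < σ) (m c : ℝ) :
    (gaussianReal m ⟨σ ^ 2, sq_nonneg σ⟩ (Iic c)).toReal = Phi ((c - m) / σ) := by
  rw [gauss_Iic hσ]; rfl

theorem Phi_mono : Monotone Phi := fun a b hab =>
  ENNReal.toReal_mono (measure_ne_top _ _) (measure_mono (Iic_subset_Iic.2 hab))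

theorem Phi_lipschitz : LipschitzWith ⟨(√(2 * π))⁻¹, by positivity⟩ Phi := by
  have hv : (1 : ℝ≥0) ≠ 0 := one_ne_zero
  have key : ∀ a b : ℝ, a ≤ b → Phi b - Phi a ≤ (√(2 * π))⁻¹ * (b - a) := by
    intro a b hab
    have hsplit : Iic b = Iic a ∪ Ioc a b := (Iic_union_Ioc_eq_Iic hab).symm
    have hdisj : Disjoint (Iic a) (Ioc a b) := by
      simp [Set.disjoint_left]
      intro z hz; intro h; linarith
    have : (gaussianReal 0 1) (Iic b)
        = (gaussianReal 0 1) (Iic a) + (gaussianReal 0 1) (Ioc a b) := by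
      rw [hsplit, measure_union hdisj measurableSet_Ioc]
    have hPhi : Phi b - Phi a = ((gaussianReal 0 1) (Ioc a b)).toReal := by
      unfold Phi
      rw [this, ENNReal.toReal_add (measure_ne_top _ _) (measure_ne_top _ _)]
      ring
    rw [hPhi]
    have hbound : (gaussianReal 0 1) (Ioc a b)
        ≤ ENNReal.ofReal ((√(2 * π))⁻¹) * volume (Ioc a b) := by
      rw [gaussianReal_apply _ hv, ← setLIntegral_const]
      refine setLIntegral_mono (by fun_prop) (fun z _ => ?_)
      unfold gaussianPDF gaussianPDFReal
      refine ENNReal.ofReal_le_ofReal ?_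
      have h1 : rexp (-(z - 0) ^ 2 / (2 * ((1:ℝ≥0):ℝ))) ≤ 1 := by
        rw [Real.exp_le_one_iff]
        have : (0:ℝ) ≤ (z - 0)^2 := sq_nonneg _
        simp only [NNReal.coe_one]
        nlinarith
      calc (√(2 * π * ((1:ℝ≥0):ℝ)))⁻¹ * rexp (-(z - 0) ^ 2 / (2 * ((1:ℝ≥0):ℝ)))
          ≤ (√(2 * π * ((1:ℝ≥0):ℝ)))⁻¹ * 1 := by
            refine mul_le_mul_of_nonneg_left h1 (by positivity)
        _ = (√(2 * π))⁻¹ := by simp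
    have := ENNReal.toReal_mono
      (ENNReal.mul_ne_top ENNReal.ofReal_ne_top (by simp [Real.volume_Ioc])) hbound
    refine this.trans ?_
    rw [Real.volume_Ioc, ENNReal.toReal_mul, ENNReal.toReal_ofReal (by positivity),
      ENNReal.toReal_ofReal (by linarith)]
  refine LipschitzWith.of_dist_le_mul fun a b => ?_
  rw [Real.dist_eq, Real.dist_eq]
  rcases le_total a b with hab | hab
  · have h1 : |Phi a - Phi b| = Phi b - Phi a := by
      rw [abs_sub_comm]; exact abs_of_nonneg (sub_nonneg.2 (Phi_mono hab))
    have h2 : |a - b| = b - a := by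
      rw [abs_sub_comm]; exact abs_of_nonneg (sub_nonneg.2 hab)
    rw [h1, h2]; exact key a b hab
  · have h1 : |Phi a - Phi b| = Phi a - Phi b :=
      abs_of_nonneg (sub_nonneg.2 (Phi_mono hab))
    have h2 : |a - b| = a - b := abs_of_nonneg (sub_nonneg.2 hab)
    rw [h1, h2]; exact key b a hab

theorem Phi_surj {p : ℝ} (hp : p ∈ Set.Ioo (0:ℝ) 1) : ∃ t, Phi t = p := by
  have hPhi : Phi = fun t => cdf (gaussianReal 0 1) t :=
    funext fun t => (cdf_eq_real _ _).symm
  have h0 : Tendsto Phi atBot (𝓝 0) := by rw [hPhi]; exact tendsto_cdf_atBot _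
  have h1 : Tendsto Phi atTop (𝓝 1) := by rw [hPhi]; exact tendsto_cdf_atTop _
  obtain ⟨a, ha⟩ := (h0.eventually_lt_const hp.1).exists
  obtain ⟨b, hb⟩ := (h1.eventually_const_lt hp.2).exists
  have ha' : Phi (min a b) < p := lt_of_le_of_lt (Phi_mono (min_le_left a b)) ha
  obtain ⟨t, -, ht⟩ := intermediate_value_Icc (min_le_right a b)
    Phi_lipschitz.continuous.continuousOn ⟨ha'.le, hb.le⟩
  exact ⟨t, ht⟩

theorem Phi_PhiInv {p : ℝ} (hp : p ∈ Set.Ioo (0:ℝ) 1) : Phi (PhiInv p) = p :=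
  Function.invFun_eq (Phi_surj hp)

theorem pivol_eq_volume (d : ℕ) :
    (Measure.pi fun _ : Fin d => (volume : Measure ℝ)).map (MeasurableEquiv.toLp 2 (Fin d → ℝ))
      = (volume : Measure (EuclideanSpace ℝ (Fin d))) := by
  rw [← MeasureTheory.volume_pi]
  exact (PiLp.volume_preserving_toLp (Fin d)).map_eq

-- F : withDensity under a measurable equivalence

theorem map_withDensity_equiv {α β : Type*} [MeasurableSpace α] [MeasurableSpace β]
    (e : α ≃ᵐ β) (μ : Measure α) {f : β → ℝ≥0∞} (hf : Measurable f) :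
    (μ.withDensity (f ∘ e)).map e = (μ.map e).withDensity f := by
  ext s hs
  rw [Measure.map_apply e.measurable hs, withDensity_apply _ hs,
    withDensity_apply _ (e.measurable hs),
    setLIntegral_map hs hf e.measurable]
  rfl

theorem gauss_pm (m : ℝ) (v : ℝ≥0) : IsProbabilityMeasure (gaussianReal m v) := inferInstance

theorem gauss_sf (m : ℝ) (v : ℝ≥0) : SigmaFinite (gaussianReal m v) := inferInstance

theorem gaussRep (hσ : 0 < σ) (m : EuclideanSpace ℝ (Fin d)) :
    gaussPi d σ m = (volume : Measure (EuclideanSpace ℝ (Fin d))).withDensity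
      (fun z => ENNReal.ofReal
        ((√(2 * π * σ ^ 2))⁻¹ ^ d * exp (-‖z - m‖ ^ 2 / (2 * σ ^ 2)))) := by
  have hv : (⟨σ ^ 2, sq_nonneg σ⟩ : ℝ≥0) ≠ 0 := by
    simp [← NNReal.coe_ne_zero, (pow_pos hσ 2).ne']
  have h1 : gaussPi d σ m = ((Measure.pi fun _ : Fin d => (volume : Measure ℝ)).withDensity
      ((fun z : EuclideanSpace ℝ (Fin d) => ∏ i, gaussianPDF (m i) ⟨σ ^ 2, sq_nonneg σ⟩ (z i))
        ∘ (MeasurableEquiv.toLp 2 (Fin d → ℝ)))).map (MeasurableEquiv.toLp 2 (Fin d → ℝ)) := by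
    rw [gaussPi]
    congr 1
    haveI : ∀ i, SigmaFinite (gaussianReal (m i) ⟨σ ^ 2, sq_nonneg σ⟩) := fun i => gauss_sf _ _
    refine pi_withDensity' _ _ (fun i => measurable_gaussianPDF _ _) (fun i => ?_)
    exact gaussianReal_of_var_ne_zero _ hv
  rw [h1, map_withDensity_equiv _ _ (by fun_prop), pivol_eq_volume]
  congr 1
  funext z
  unfold gaussianPDF
  set v : ℝ≥0 := ⟨σ ^ 2, sq_nonneg σ⟩ with hv_def
  rw [← ENNReal.ofReal_prod_of_nonneg (fun i _ => gaussianPDFReal_nonneg _ _ _)]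
  congr 1
  unfold gaussianPDFReal
  simp only [show (v : ℝ) = σ ^ 2 from rfl]
  rw [Finset.prod_mul_distrib, Finset.prod_const, ← Real.exp_sum, Finset.card_univ,
    Fintype.card_fin]
  congr 1
  have hnorm : ‖z - m‖ ^ 2 = ∑ i, (z i - m i) ^ 2 := by
    rw [EuclideanSpace.norm_eq, sq_sqrt (Finset.sum_nonneg fun i _ => sq_nonneg _)]
    exact Finset.sum_congr rfl fun i _ => by
      simp [PiLp.sub_apply, Real.norm_eq_abs, sq_abs]
  rw [← Finset.sum_div, hnorm, Finset.sum_neg_distrib]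

theorem gauss_rot (hσ : 0 < σ) (m : EuclideanSpace ℝ (Fin d))
    (R : EuclideanSpace ℝ (Fin d) ≃ₗᵢ[ℝ] EuclideanSpace ℝ (Fin d)) :
    (gaussPi d σ m).map R = gaussPi d σ (R m) := by
  let e : EuclideanSpace ℝ (Fin d) ≃ᵐ EuclideanSpace ℝ (Fin d) :=
    R.toHomeomorph.toMeasurableEquiv
  have hcoe : ⇑e = ⇑R := rfl
  have hfm : Measurable (fun z : EuclideanSpace ℝ (Fin d) => ENNReal.ofReal
      ((√(2 * π * σ ^ 2))⁻¹ ^ d * exp (-‖z - R m‖ ^ 2 / (2 * σ ^ 2)))) := by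
    refine Measurable.ennreal_ofReal ?_
    fun_prop
  have hdens : gaussPi d σ m = (volume : Measure (EuclideanSpace ℝ (Fin d))).withDensity
      ((fun z => ENNReal.ofReal
        ((√(2 * π * σ ^ 2))⁻¹ ^ d * exp (-‖z - R m‖ ^ 2 / (2 * σ ^ 2)))) ∘ e) := by
    rw [gaussRep hσ]
    congr 1
    funext z
    simp only [Function.comp_apply, hcoe]
    congr 3
    rw [← R.norm_map (z - m), map_sub]
  have hmapvol : (volume : Measure (EuclideanSpace ℝ (Fin d))).map ⇑e = volume := by
    rw [hcoe]; exact R.measurePreserving.map_eq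
  have main : (gaussPi d σ m).map ⇑e = gaussPi d σ (R m) := by
    rw [hdens, map_withDensity_equiv e _ hfm, hmapvol, gaussRep hσ]
  exact main

instance (d : ℕ) (x : EuclideanSpace ℝ (Fin d)) :
    IsProbabilityMeasure (gaussPi d σ x) := by
  haveI : ∀ i, IsProbabilityMeasure (gaussianReal (x i) ⟨σ ^ 2, sq_nonneg σ⟩) := fun i => gauss_pm _ _
  exact Measure.isProbabilityMeasure_map (MeasurableEquiv.toLp 2 (Fin d → ℝ)).measurable.aemeasurable

theorem gauss_coord (w : EuclideanSpace ℝ (Fin (n + 1))) (c : ℝ) :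
    gaussPi (n + 1) σ w {z : EuclideanSpace ℝ (Fin (n + 1)) | z 0 ≤ c}
      = gaussianReal (w 0) ⟨σ ^ 2, sq_nonneg σ⟩ (Iic c) := by
  have hset : WithLp.toLp 2 ⁻¹' {z : EuclideanSpace ℝ (Fin (n + 1)) | z 0 ≤ c}
      = Set.pi univ (fun i => if i = 0 then Iic c else univ) := by
    ext z
    simp only [mem_preimage, PiLp.toLp_apply, mem_setOf_eq, Set.mem_pi, mem_univ, forall_true_left]
    constructor
    · intro h i
      by_cases hi : i = 0
      · subst hi; simpa using h
      · simp [hi]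
    · intro h
      have := h 0
      simpa using this
  rw [gaussPi]
  set v : ℝ≥0 := ⟨σ ^ 2, sq_nonneg σ⟩ with hv_def
  rw [Measure.map_apply (PiLp.volume_preserving_toLp (Fin (n + 1))).measurable
    (measurableSet_le (by fun_prop) measurable_const), hset]
  refine (Measure.pi_pi _ _).trans ?_
  rw [Finset.prod_eq_single 0 (fun i _ hi => by simp [hi]) (by simp)]
  simp

theorem coord_shift (y : EuclideanSpace ℝ (Fin (n + 1))) (t : ℝ) :
    ∀ i, (y + t • EuclideanSpace.single (0 : Fin (n + 1)) (1 : ℝ)) i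
      = y i + (if i = 0 then t else 0) := by
  intro i
  by_cases hi : i = 0 <;>
    simp [hi, PiLp.add_apply, PiLp.smul_apply, EuclideanSpace.single_apply, smul_eq_mul]

theorem gaussPi_shift (hσ : 0 < σ) (y : EuclideanSpace ℝ (Fin (n + 1))) (t : ℝ) :
    gaussPi (n + 1) σ (y + t • EuclideanSpace.single (0 : Fin (n + 1)) (1 : ℝ))
      = (gaussPi (n + 1) σ y).withDensity
        (fun z : EuclideanSpace ℝ (Fin (n + 1)) =>
          ENNReal.ofReal (exp ((t * (z 0 - y 0) - t ^ 2 / 2) / σ ^ 2))) := by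
  set f : Fin (n + 1) → ℝ → ℝ≥0∞ := fun i s =>
    if i = 0 then ENNReal.ofReal (exp ((t * (s - y 0) - t ^ 2 / 2) / σ ^ 2)) else 1 with hf_def
  have hf : ∀ i, Measurable (f i) := by
    intro i
    by_cases hi : i = 0 <;> simp only [hf_def, hi, if_true, if_false] <;> fun_prop
  have hν : ∀ i, gaussianReal ((y + t • EuclideanSpace.single (0 : Fin (n + 1)) (1 : ℝ)) i)
      ⟨σ ^ 2, sq_nonneg σ⟩ = (gaussianReal (y i) ⟨σ ^ 2, sq_nonneg σ⟩).withDensity (f i) := by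
    intro i
    rw [coord_shift]
    by_cases hi : i = 0
    · subst hi
      simp only [if_true, hf_def, reduceIte]
      exact gauss_shift_density hσ (y 0) t
    · simp only [hi, if_false, add_zero, hf_def]
      exact withDensity_one.symm
  haveI : ∀ i, SigmaFinite (gaussianReal (y i) ⟨σ ^ 2, sq_nonneg σ⟩) := fun i => gauss_sf _ _
  haveI : ∀ i, SigmaFinite (gaussianReal ((y + t • EuclideanSpace.single (0 : Fin (n + 1)) (1 : ℝ)) i)
    ⟨σ ^ 2, sq_nonneg σ⟩) := fun i => gauss_sf _ _
  have h := pi_withDensity' (fun i => gaussianReal (y i) ⟨σ ^ 2, sq_nonneg σ⟩)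
    (fun i => gaussianReal ((y + t • EuclideanSpace.single (0 : Fin (n + 1)) (1 : ℝ)) i)
      ⟨σ ^ 2, sq_nonneg σ⟩) hf hν
  have hg : Measurable (fun z : EuclideanSpace ℝ (Fin (n + 1)) =>
      ENNReal.ofReal (exp ((t * (z 0 - y 0) - t ^ 2 / 2) / σ ^ 2))) := by fun_prop
  rw [gaussPi, gaussPi, h]
  erw [← map_withDensity_equiv (MeasurableEquiv.toLp 2 (Fin (n + 1) → ℝ)) _ hg]
  congr 2
  funext z
  rw [Finset.prod_eq_single 0 (fun i _ hi => by simp [hf_def, hi]) (by simp)]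
  simp [hf_def]

theorem NP_core (hσ : 0 < σ) {t : ℝ} (ht : 0 ≤ t)
    (y : EuclideanSpace ℝ (Fin (n + 1))) {B : Set (EuclideanSpace ℝ (Fin (n + 1)))}
    (hB : MeasurableSet B) (c : ℝ)
    (hHB : gaussPi (n + 1) σ y {z : EuclideanSpace ℝ (Fin (n + 1)) | z 0 ≤ c}
      ≤ gaussPi (n + 1) σ y B) :
    gaussPi (n + 1) σ (y + t • EuclideanSpace.single (0 : Fin (n + 1)) (1 : ℝ))
        {z : EuclideanSpace ℝ (Fin (n + 1)) | z 0 ≤ c}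
      ≤ gaussPi (n + 1) σ (y + t • EuclideanSpace.single (0 : Fin (n + 1)) (1 : ℝ)) B := by
  classical
  set μ := gaussPi (n + 1) σ y with hμ
  set H : Set (EuclideanSpace ℝ (Fin (n + 1))) := {z | z 0 ≤ c} with hH_def
  have hH : MeasurableSet H := by
    have : H = (fun z : EuclideanSpace ℝ (Fin (n + 1)) => z 0) ⁻¹' Iic c := rfl
    rw [this]
    exact measurableSet_Iic.preimage (by fun_prop)
  set r : ℝ → ℝ≥0∞ := fun s => ENNReal.ofReal (exp ((t * (s - y 0) - t ^ 2 / 2) / σ ^ 2))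
    with hr_def
  have hrmeas : Measurable (fun z : EuclideanSpace ℝ (Fin (n + 1)) => r (z 0)) := by
    refine Measurable.ennreal_ofReal ?_
    fun_prop
  have hrmono : ∀ a b : ℝ, a ≤ b → r a ≤ r b := by
    intro a b hab
    refine ENNReal.ofReal_le_ofReal (exp_le_exp.2 ?_)
    have h1 : t * (a - y 0) ≤ t * (b - y 0) := by nlinarith
    gcongr
  rw [gaussPi_shift hσ, withDensity_apply _ hH, withDensity_apply _ hB]
  have split : ∀ s u : Set (EuclideanSpace ℝ (Fin (n + 1))), MeasurableSet s → MeasurableSet u →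
      ∫⁻ z in s, r (z 0) ∂μ = ∫⁻ z in s ∩ u, r (z 0) ∂μ + ∫⁻ z in s \ u, r (z 0) ∂μ := by
    intro s u hs hu
    conv_lhs => rw [← Set.inter_union_diff s u]
    exact lintegral_union (hs.diff hu)
      (disjoint_sdiff_self_right.mono_left Set.inter_subset_right)
  have hub : ∫⁻ z in H \ B, r (z 0) ∂μ ≤ r c * μ (H \ B) := by
    rw [← setLIntegral_const]
    exact setLIntegral_mono measurable_const
      (fun z hz => hrmono _ _ hz.1)
  have hlb : r c * μ (B \ H) ≤ ∫⁻ z in B \ H, r (z 0) ∂μ := by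
    rw [← setLIntegral_const]
    exact setLIntegral_mono hrmeas
      (fun z hz => hrmono _ _ (le_of_not_ge hz.2))
  have hmeasineq : μ (H \ B) ≤ μ (B \ H) := by
    have h1 : μ (H ∩ B) + μ (H \ B) = μ H := measure_inter_add_diff H hB
    have h2 : μ (B ∩ H) + μ (B \ H) = μ B := measure_inter_add_diff B hH
    have hcomm : μ (B ∩ H) = μ (H ∩ B) := by rw [Set.inter_comm]
    have hle := hHB
    rw [← h1, ← h2, hcomm] at hle
    exact (ENNReal.add_le_add_iff_left (measure_ne_top _ _)).1 hle
  calc ∫⁻ z in H, r (z 0) ∂μ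
      = ∫⁻ z in H ∩ B, r (z 0) ∂μ + ∫⁻ z in H \ B, r (z 0) ∂μ := split H B hH hB
    _ ≤ ∫⁻ z in H ∩ B, r (z 0) ∂μ + r c * μ (H \ B) := add_le_add_right hub _
    _ ≤ ∫⁻ z in H ∩ B, r (z 0) ∂μ + r c * μ (B \ H) := by
        exact add_le_add_right (mul_le_mul_right hmeasineq _) _
    _ ≤ ∫⁻ z in B ∩ H, r (z 0) ∂μ + ∫⁻ z in B \ H, r (z 0) ∂μ := by
        rw [Set.inter_comm]
        exact add_le_add_right hlb _
    _ = ∫⁻ z in B, r (z 0) ∂μ := (split B H hB hH).symm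

end Auxiliary

/-- Gaussian shift lower bound (Neyman–Pearson lemma consequence): if `μ_x(A) ≥ p` then for
every shift `δ`, `μ_{x+δ}(A) ≥ Φ(Φ⁻¹(p) - ‖δ‖₂/σ)`. -/
theorem gaussian_shift_lower_bound
    {d : ℕ} {σ : ℝ} (hσ : 0 < σ)
    (A : Set (EuclideanSpace ℝ (Fin d))) (hA : MeasurableSet A)
    (x : EuclideanSpace ℝ (Fin d)) (p : ℝ) (hp : p ∈ Set.Ioo (0 : ℝ) 1)
    (h : p ≤ (gaussPi d σ x A).toReal) :
    ∀ δ : EuclideanSpace ℝ (Fin d),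
      Phi (PhiInv p - ‖δ‖ / σ) ≤ (gaussPi d σ (x + δ) A).toReal := by
  intro δ
  by_cases hδ : δ = 0
  · subst hδ
    simp only [norm_zero, zero_div, sub_zero, add_zero]
    rw [Phi_PhiInv hp]
    exact h
  · haveI : Subsingleton (EuclideanSpace ℝ (Fin 0)) :=
      ⟨fun a b => PiLp.ext fun i => Fin.elim0 i⟩
    have hd : d ≠ 0 := by
      rintro rfl
      exact hδ (Subsingleton.elim δ 0)
    obtain ⟨n, rfl⟩ : ∃ n, d = n + 1 := ⟨d - 1, by omega⟩
    set t : ℝ := ‖δ‖ with ht_def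
    have ht : 0 < t := norm_pos_iff.2 hδ
    set u : EuclideanSpace ℝ (Fin (n + 1)) := t⁻¹ • δ with hu_def
    have hu : ‖u‖ = 1 := by
      rw [hu_def, norm_smul, norm_inv, norm_norm, inv_mul_cancel₀ ht.ne']
    set e0 : EuclideanSpace ℝ (Fin (n + 1)) :=
      EuclideanSpace.single (0 : Fin (n + 1)) (1 : ℝ) with he0_def
    have he0 : ‖e0‖ = 1 := by
      rw [he0_def, EuclideanSpace.norm_single, norm_one]
    set R := Submodule.reflection (Submodule.span ℝ {e0 - u})ᗮ with hR_def
    have hRe0 : R e0 = u := Submodule.reflection_sub (by rw [he0, hu])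
    set y := R.symm x with hy_def
    have hxy : R y = x := R.apply_symm_apply x
    have hδeq : R (t • e0) = δ := by
      rw [_root_.map_smul, hRe0, hu_def, smul_smul, mul_inv_cancel₀ ht.ne', one_smul]
    set B : Set (EuclideanSpace ℝ (Fin (n + 1))) := ⇑R ⁻¹' A with hB_def
    have hBm : MeasurableSet B := hA.preimage R.continuous.measurable
    have hmap1 : gaussPi (n + 1) σ x A = gaussPi (n + 1) σ y B := by
      rw [← hxy, ← gauss_rot hσ, Measure.map_apply R.continuous.measurable hA]
    have hmap2 : gaussPi (n + 1) σ (x + δ) A = gaussPi (n + 1) σ (y + t • e0) B := by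
      have hsum : R (y + t • e0) = x + δ := by rw [map_add, hxy, hδeq]
      rw [← hsum, ← gauss_rot hσ, Measure.map_apply R.continuous.measurable hA]
    set q := PhiInv p with hq_def
    have hq : Phi q = p := Phi_PhiInv hp
    set c : ℝ := y 0 + σ * q with hc_def
    have hcq : (c - y 0) / σ = q := by
      rw [hc_def]
      field_simp
      ring
    have hHtoReal : (gaussPi (n + 1) σ y {z : EuclideanSpace ℝ (Fin (n + 1)) | z 0 ≤ c}).toReal
        = p := by
      rw [gauss_coord, gauss_Iic_toReal hσ, hcq, hq]
    have hHB : gaussPi (n + 1) σ y {z : EuclideanSpace ℝ (Fin (n + 1)) | z 0 ≤ c}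
        ≤ gaussPi (n + 1) σ y B := by
      refine (ENNReal.toReal_le_toReal (measure_ne_top _ _) (measure_ne_top _ _)).1 ?_
      rw [hHtoReal, ← hmap1]
      exact h
    have hNP := NP_core hσ ht.le y hBm c hHB
    have hfinal : (gaussPi (n + 1) σ (y + t • e0)
        {z : EuclideanSpace ℝ (Fin (n + 1)) | z 0 ≤ c}).toReal = Phi (q - t / σ) := by
      rw [gauss_coord, gauss_Iic_toReal hσ]
      congr 1
      have h0 : (y + t • e0) 0 = y 0 + t := by
        simp [he0_def, PiLp.add_apply, PiLp.smul_apply, EuclideanSpace.single_apply]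
      rw [h0, hc_def]
      field_simp
      ring
    calc Phi (PhiInv p - ‖δ‖ / σ)
        = (gaussPi (n + 1) σ (y + t • e0)
            {z : EuclideanSpace ℝ (Fin (n + 1)) | z 0 ≤ c}).toReal := hfinal.symm
      _ ≤ (gaussPi (n + 1) σ (y + t • e0) B).toReal :=
          ENNReal.toReal_mono (measure_ne_top _ _) hNP
      _ = (gaussPi (n + 1) σ (x + δ) A).toReal := by rw [hmap2]
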